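/- Let α ∈ (0,1] be transcendental. Then the real numbers log(m+α), for m ranging over ℕ₀, are linearly independent over ℚ. -/

import Mathlib

open Polynomial Finset

private lemma count_roots_prod_pow (s : Finset ℕ) (a : ℕ → ℕ) (i : ℕ) (hi : i ∈ s) :
    ((∏ m ∈ s, (X - C (-(m:ℚ))) ^ (a m)).roots).count (-(i:ℚ)) = a i := by
  have hne : (∏ m ∈ s, (X - C (-(m:ℚ))) ^ (a m)) ≠ 0 := by
    apply Monic.ne_zero
    exact monic_prod_of_monic _ _ fun m _ => (monic_X_sub_C _).pow _
  rw [Polynomial.roots_prod _ _ hne]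
  simp only [roots_pow, roots_X_sub_C]
  rw [Multiset.count_bind]
  have : (Multiset.map (fun b => Multiset.count (-(i:ℚ)) (a b • {(-(b:ℚ))})) s.val).sum
      = ∑ m ∈ s, a m * (if (-(i:ℚ)) = -(m:ℚ) then 1 else 0) := by
    rw [Finset.sum]
    congr 1
    apply Multiset.map_congr rfl
    intro m _
    rw [Multiset.count_nsmul, Multiset.count_singleton]
  rw [this, Finset.sum_eq_single i]
  · simp
  · intro m hm hmi
    have : ¬ (-(i:ℚ)) = -(m:ℚ) := by
      simp only [neg_inj, Nat.cast_inj]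
      omega
    simp [this]
  · intro h; exact absurd hi h

private lemma aux_int (α : ℝ) (hα : Transcendental ℚ α) (hα0 : 0 < α) :
    LinearIndependent ℤ (fun m : ℕ => Real.log ((m : ℝ) + α)) := by
  rw [linearIndependent_iff']
  intro s g hsum i hi
  have hx : ∀ m : ℕ, (0:ℝ) < (m:ℝ) + α := fun m => by positivity
  -- the product of zpows equals 1
  have h1 : ∏ m ∈ s, ((m:ℝ) + α) ^ (g m) = 1 := by
    have hlog : Real.log (∏ m ∈ s, ((m:ℝ) + α) ^ (g m)) = 0 := by
      rw [Real.log_prod (fun m _ => zpow_ne_zero _ (hx m).ne')]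
      rw [← hsum]
      exact Finset.sum_congr rfl fun m _ => by
        rw [Real.log_zpow, zsmul_eq_mul]
    have hpos : (0:ℝ) < ∏ m ∈ s, ((m:ℝ) + α) ^ (g m) :=
      Finset.prod_pos fun m _ => zpow_pos (hx m) _
    rw [← Real.exp_log hpos, hlog, Real.exp_zero]
  set a : ℕ → ℕ := fun m => (g m).toNat with ha
  set b : ℕ → ℕ := fun m => (-(g m)).toNat with hb
  have h2 : ∏ m ∈ s, ((m:ℝ) + α) ^ (a m) = ∏ m ∈ s, ((m:ℝ) + α) ^ (b m) := by
    have : ∀ m ∈ s, ((m:ℝ) + α) ^ (g m)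
        = ((m:ℝ) + α) ^ (a m) / ((m:ℝ) + α) ^ (b m) := by
      intro m _
      have hg : g m = (a m : ℤ) - (b m : ℤ) := by simp only [ha, hb]; omega
      rw [hg, zpow_sub₀ (hx m).ne', zpow_natCast, zpow_natCast]
    rw [Finset.prod_congr rfl this, Finset.prod_div_distrib, div_eq_one_iff_eq] at h1
    · exact h1
    · exact (Finset.prod_pos fun m _ => pow_pos (hx m) _).ne'
  -- polynomials
  set P : ℚ[X] := ∏ m ∈ s, (X - C (-(m:ℚ))) ^ (a m) with hP
  set Q : ℚ[X] := ∏ m ∈ s, (X - C (-(m:ℚ))) ^ (b m) with hQ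
  have heval : ∀ c : ℕ → ℕ, (aeval α) (∏ m ∈ s, (X - C (-(m:ℚ))) ^ (c m))
      = ∏ m ∈ s, ((m:ℝ) + α) ^ (c m) := by
    intro c
    rw [map_prod]
    refine Finset.prod_congr rfl fun m _ => ?_
    rw [map_pow]
    congr 1
    simp [sub_neg_eq_add, add_comm]
  have hPQ : P = Q := by
    have h0 : (aeval α) (P - Q) = 0 := by
      rw [map_sub, hP, hQ, heval a, heval b, h2, sub_self]
    have := (transcendental_iff.mp hα) _ h0
    exact sub_eq_zero.mp this
  have hcount : a i = b i := by
    have h1 := count_roots_prod_pow s a i hi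
    have h2 := count_roots_prod_pow s b i hi
    rw [← hP] at h1; rw [← hQ] at h2
    rw [hPQ] at h1
    omega
  simp only [ha, hb] at hcount
  omega

theorem stmt_7 (α : ℝ) (hα : Transcendental ℚ α) (hα0 : 0 < α) (hα1 : α ≤ 1) :
    LinearIndependent ℚ (fun m : ℕ => Real.log ((m : ℝ) + α)) := by
  exact (aux_int α hα hα0).localization ℚ (nonZeroDivisors ℤ)
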